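/- For every m ≥ 1 there exists a real-valued even Schwartz function φ on ℝ such that the Fourier transform of φ is supported in [-1, 1], φ(0) = 1, and φ^{(ν)}(0) = 0 for ν = 1, 2, ..., m. -/

import Mathlib

open Real MeasureTheory Set FourierTransform SchwartzMap Complex Polynomial


noncomputable def mySchwartz {F : Type*} [NormedAddCommGroup F] [NormedSpace ℝ F]
    (f : ℝ → F) (hsm : ContDiff ℝ ((⊤ : ℕ∞) : WithTop ℕ∞) f) (hcs : HasCompactSupport f) :
    SchwartzMap ℝ F where
  toFun := f
  smooth' := hsm
  decay' := by
    intro k n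
    have hcont : Continuous fun x : ℝ => ‖x‖ ^ k * ‖iteratedFDeriv ℝ n f x‖ :=
      ((continuous_norm.pow k).mul (hsm.continuous_iteratedFDeriv (mod_cast le_top)).norm)
    have hcs2 : HasCompactSupport fun x : ℝ => ‖x‖ ^ k * ‖iteratedFDeriv ℝ n f x‖ :=
      ((hcs.iteratedFDeriv n).norm).mul_left
    obtain ⟨C, hC⟩ := hcont.bounded_above_of_compact_support hcs2
    exact ⟨C, fun x => le_trans (le_abs_self _) (hC x)⟩

noncomputable def reSchwartz (f : SchwartzMap ℝ ℂ) : SchwartzMap ℝ ℝ where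
  toFun := fun x => (f x).re
  smooth' := Complex.reCLM.contDiff.comp (f.smooth _)
  decay' := by
    intro k n
    obtain ⟨C, hC⟩ := f.decay k n
    refine ⟨C, fun x => ?_⟩
    have h1 : iteratedFDeriv ℝ n (fun x => (f x).re) x
        = Complex.reCLM.compContinuousMultilinearMap (iteratedFDeriv ℝ n (⇑f) x) :=
      Complex.reCLM.iteratedFDeriv_comp_left (f.smooth _).contDiffAt le_rfl
    rw [h1]
    calc ‖x‖ ^ k * ‖Complex.reCLM.compContinuousMultilinearMap (iteratedFDeriv ℝ n (⇑f) x)‖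
        ≤ ‖x‖ ^ k * (‖Complex.reCLM‖ * ‖iteratedFDeriv ℝ n (⇑f) x‖) := by
          gcongr; exact Complex.reCLM.norm_compContinuousMultilinearMap_le _
      _ ≤ ‖x‖ ^ k * (1 * ‖iteratedFDeriv ℝ n (⇑f) x‖) := by
          gcongr; rw [Complex.reCLM_norm]
      _ = ‖x‖ ^ k * ‖iteratedFDeriv ℝ n (⇑f) x‖ := by ring
      _ ≤ C := hC.2 x

set_option maxHeartbeats 1000000 in
theorem exists_bandlimited_schwartz (m : ℕ) (hm : 1 ≤ m) :
    ∃ φ : SchwartzMap ℝ ℝ,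
      (∀ x : ℝ, φ (-x) = φ x) ∧
      (Function.support (𝓕 (fun x : ℝ => (φ x : ℂ))) ⊆ Set.Icc (-1 : ℝ) 1) ∧
      φ 0 = 1 ∧
      (∀ ν : ℕ, 1 ≤ ν → ν ≤ m → iteratedDeriv ν (fun x : ℝ => φ x) 0 = 0) := by
  classical
  set δ : ℝ := 1 / (m + 1) with hδdef
  have hδpos : 0 < δ := by positivity
  set b : ContDiffBump (0 : ℝ) := ⟨δ/2, δ, by positivity, by linarith⟩ with hb
  set g : ℝ → ℝ := b.normed volume with hgdef
  have hg_smooth : ContDiff ℝ ((⊤ : ℕ∞) : WithTop ℕ∞) g := b.contDiff_normed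
  have hg_cs : HasCompactSupport g := b.hasCompactSupport_normed (μ := volume)
  set gC : ℝ → ℂ := fun x => (g x : ℂ) with hgCdef
  have hgC_smooth : ContDiff ℝ ((⊤ : ℕ∞) : WithTop ℕ∞) gC :=
    Complex.ofRealCLM.contDiff.comp hg_smooth
  have hgC_cs : HasCompactSupport gC := hg_cs.comp_left Complex.ofReal_zero
  have hgC_even : ∀ x, gC (-x) = gC x := fun x => by
    simp only [hgCdef, hgdef]; rw [b.normed_neg]
  set G : SchwartzMap ℝ ℂ := mySchwartz gC hgC_smooth hgC_cs with hG
  have hGcoe : ⇑G = gC := rfl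
  set ψ : SchwartzMap ℝ ℂ := (FourierTransform.fourierCLE ℝ (SchwartzMap ℝ ℂ)).symm G with hψdef
  have hψ_fun : ⇑ψ = 𝓕⁻ gC := by
    rw [hψdef, ← hGcoe, FourierTransform.fourierCLE_symm_apply, SchwartzMap.fourierInv_coe]
  have hFψ : 𝓕 ⇑ψ = gC := by
    have h1 : (FourierTransform.fourierCLE ℝ (SchwartzMap ℝ ℂ)) ψ = G := by
      rw [hψdef]; exact (FourierTransform.fourierCLE ℝ (SchwartzMap ℝ ℂ)).apply_symm_apply G
    have h2 := FourierTransform.fourierCLE_apply (R := ℝ) ψ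
    rw [h1] at h2
    rw [← hGcoe, h2]
    rfl
  -- 𝓕 gC = 𝓕⁻ gC
  have hsymm : 𝓕 gC = 𝓕⁻ gC := by
    have hfn : (fun x => gC (-x)) = gC := funext hgC_even
    rw [fourierInv_eq_fourier_comp_neg, hfn]
  have hψ_even : ∀ x, ψ (-x) = ψ x := by
    intro x
    have h1 : ψ (-x) = 𝓕⁻ gC (-x) := by rw [hψ_fun]
    rw [h1, fourierInv_eq_fourier_neg, neg_neg, hsymm, ← hψ_fun]
  have hψ_real : ∀ x, (starRingEnd ℂ) (ψ x) = ψ x := by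
    intro x
    have h1 : ψ x = 𝓕 gC x := by rw [hψ_fun, hsymm]
    have h2 : ψ x = 𝓕⁻ gC x := by rw [hψ_fun]
    conv_lhs => rw [h2, fourierInv_eq_fourier_neg]
    conv_rhs => rw [h1]
    rw [Real.fourier_real_eq, Real.fourier_real_eq, ← integral_conj]
    congr 1
    ext v
    calc (starRingEnd ℂ) (𝐞 (-(v * -x)) • gC v)
        = (starRingEnd ℂ) ((𝐞 (-(v * -x)) : ℂ)) * (starRingEnd ℂ) (gC v) := by
          simp only [Circle.smul_def, smul_eq_mul, map_mul]
      _ = 𝐞 (-(v * x)) • gC v := by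
          simp only [Circle.smul_def, smul_eq_mul]
          rw [Real.fourierChar_apply, Real.fourierChar_apply, ← Complex.exp_conj]
          congr 2
          · rw [map_mul, Complex.conj_I, Complex.conj_ofReal]; push_cast; ring
          · simp only [hgCdef, Complex.conj_ofReal]
  have hψ0 : ψ 0 = 1 := by
    have h1 : ψ 0 = 𝓕 gC 0 := by rw [hψ_fun, hsymm]
    rw [h1, Real.fourier_real_eq]
    simp only [mul_zero, neg_zero, AddChar.map_zero_eq_one, one_smul]
    rw [hgCdef, hgdef]
    calc ∫ v : ℝ, ((b.normed volume v : ℝ) : ℂ)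
        = ((∫ v : ℝ, b.normed volume v : ℝ) : ℂ) := integral_ofReal
      _ = 1 := by rw [b.integral_normed (μ := volume)]; norm_num
  -- Fourier scaling lemma
  have fourier_scale : ∀ (f : ℝ → ℂ) (c : ℝ), c ≠ 0 → ∀ ξ : ℝ,
      𝓕 (fun x => f (c * x)) ξ
        = |c⁻¹| • 𝓕 f (ξ / c) := by
    intro f c hc ξ
    rw [Real.fourier_real_eq, Real.fourier_real_eq]
    have h2 : (∫ x : ℝ, 𝐞 (-(x * ξ)) • f (c * x))
        = ∫ x : ℝ, (fun y => 𝐞 (-(y * (ξ / c))) • f y) (c * x) := by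
      congr 1
      funext x
      simp only
      congr 2
      field_simp
    rw [h2, Measure.integral_comp_mul_left (fun y => 𝐞 (-(y * (ξ / c))) • f y) c]
  -- real part of ψ
  set Ψ : ℝ → ℝ := fun x => (ψ x).re with hΨdef
  -- Lagrange coefficients
  set vv : ℕ → ℝ := fun j => (j : ℝ) + 1 with hvdef
  set t : Finset ℕ := Finset.range (m + 1) with htdef
  have hvs : Set.InjOn vv t := by
    intro i _ j _ h
    have h2 : (i : ℝ) = j := by
      have : (i : ℝ) + 1 = (j : ℝ) + 1 := h
      linarith
    exact_mod_cast h2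
  set a : ℕ → ℝ := fun j => (Lagrange.basis t vv j).eval 0 with hadef
  have key : ∀ ν : ℕ, ν ≤ m → ∑ j ∈ t, a j * (vv j) ^ ν = if ν = 0 then 1 else 0 := by
    intro ν hν
    have hdeg : (Polynomial.X ^ ν : Polynomial ℝ).degree < t.card := by
      rw [Polynomial.degree_X_pow, htdef, Finset.card_range]
      exact_mod_cast Nat.lt_succ_of_le hν
    have h := Lagrange.eq_interpolate hvs hdeg
    have h0 := congrArg (Polynomial.eval 0) h
    rw [Lagrange.interpolate_apply, Polynomial.eval_finset_sum] at h0
    simp only [Polynomial.eval_mul, Polynomial.eval_C, Polynomial.eval_pow,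
      Polynomial.eval_X] at h0
    rw [zero_pow_eq] at h0
    calc ∑ j ∈ t, a j * vv j ^ ν
        = ∑ j ∈ t, vv j ^ ν * Polynomial.eval 0 (Lagrange.basis t vv j) :=
          Finset.sum_congr rfl fun j _ => by simp only [hadef]; ring
      _ = if ν = 0 then 1 else 0 := h0.symm
  have hvpos : ∀ j : ℕ, (0 : ℝ) < vv j := fun j => by positivity
  -- scaled Schwartz maps
  set L : ℕ → (ℝ ≃L[ℝ] ℝ) := fun j =>
    (LinearEquiv.smulOfNeZero ℝ ℝ (vv j) (hvpos j).ne').toContinuousLinearEquiv with hLdef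
  have hLapp : ∀ j x, L j x = vv j * x := fun j x => rfl
  set ψS : ℕ → SchwartzMap ℝ ℂ := fun j =>
    SchwartzMap.compCLMOfContinuousLinearEquiv ℝ (L j) ψ with hψSdef
  have hψS_app : ∀ j x, ψS j x = ψ (vv j * x) := fun j x => rfl
  have hψS_fun : ∀ j, ⇑(ψS j) = fun x => ψ (vv j * x) := fun j => rfl
  set φC : SchwartzMap ℝ ℂ := ∑ j ∈ t, a j • ψS j with hφCdef
  have hφC_fun : ⇑φC = ∑ j ∈ t, ⇑(a j • ψS j) := by
    rw [hφCdef]; exact map_sum (FunLike.coeAddMonoidHom (SchwartzMap ℝ ℂ) ℝ ℂ) _ t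
  have hφC_app : ∀ x, φC x = ∑ j ∈ t, (a j : ℂ) * ψ (vv j * x) := by
    intro x
    rw [show φC x = (⇑φC) x from rfl, hφC_fun, Finset.sum_apply]
    refine Finset.sum_congr rfl fun j hj => ?_
    rw [SchwartzMap.smul_apply, hψS_app, Complex.real_smul]
  set φ : SchwartzMap ℝ ℝ := reSchwartz φC with hφdef
  have hφ_app : ∀ x, φ x = (φC x).re := fun x => rfl
  have hφC_conj : ∀ x, (starRingEnd ℂ) (φC x) = φC x := by
    intro x
    rw [hφC_app, map_sum]
    refine Finset.sum_congr rfl fun j hj => ?_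
    rw [map_mul, Complex.conj_ofReal, hψ_real]
  have hφ_coe : ∀ x, ((φ x : ℝ) : ℂ) = φC x := fun x => Complex.conj_eq_iff_re.mp (hφC_conj x)
  refine ⟨φ, ?_, ?_, ?_, ?_⟩
  · -- even
    intro x
    rw [hφ_app, hφ_app, hφC_app, hφC_app]
    congr 1
    refine Finset.sum_congr rfl fun j hj => ?_
    rw [show vv j * -x = -(vv j * x) by ring, hψ_even]
  · -- support
    rw [Function.support_subset_iff']
    intro ξ hξ
    have hξ1 : 1 < |ξ| := lt_of_not_ge fun h => hξ (Set.mem_Icc.mpr (abs_le.mp h))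
    have hcoe : (fun x : ℝ => ((φ x : ℝ) : ℂ)) = ⇑φC := funext hφ_coe
    rw [hcoe]
    have e1 : 𝓕 (⇑φC) ξ = (SchwartzMap.fourierTransformCLM ℝ φC) ξ := by
      rw [SchwartzMap.fourierTransformCLM_apply, SchwartzMap.fourier_coe]
    have e2 : SchwartzMap.fourierTransformCLM ℝ φC
        = ∑ j ∈ t, a j • SchwartzMap.fourierTransformCLM ℝ (ψS j) := by
      rw [hφCdef, map_sum]
      exact Finset.sum_congr rfl fun j _ => map_smul _ _ _
    have e3 : ⇑(∑ j ∈ t, a j • SchwartzMap.fourierTransformCLM ℝ (ψS j))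
        = ∑ j ∈ t, ⇑(a j • SchwartzMap.fourierTransformCLM ℝ (ψS j)) :=
      map_sum (FunLike.coeAddMonoidHom (SchwartzMap ℝ ℂ) ℝ ℂ) _ t
    rw [e1, e2, show (∑ j ∈ t, a j • SchwartzMap.fourierTransformCLM ℝ (ψS j)) ξ
        = (⇑(∑ j ∈ t, a j • SchwartzMap.fourierTransformCLM ℝ (ψS j))) ξ from rfl, e3,
      Finset.sum_apply]
    refine Finset.sum_eq_zero fun j hj => ?_
    rw [SchwartzMap.smul_apply, SchwartzMap.fourierTransformCLM_apply, SchwartzMap.fourier_coe, hψS_fun j,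
      fourier_scale (⇑ψ) (vv j) (hvpos j).ne' ξ, hFψ]
    have hjle : vv j ≤ (m : ℝ) + 1 := by
      have := Finset.mem_range.mp (htdef ▸ hj)
      rw [hvdef]
      simp only
      have : (j : ℝ) ≤ m := by exact_mod_cast Nat.lt_succ_iff.mp this
      linarith
    have habs : |ξ / vv j| = |ξ| / vv j := by
      rw [abs_div, abs_of_pos (hvpos j)]
    have hgt : δ < |ξ / vv j| := by
      rw [habs, hδdef]
      calc 1 / ((m : ℝ) + 1) ≤ 1 / vv j :=
            one_div_le_one_div_of_le (hvpos j) hjle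
        _ < |ξ| / vv j := by gcongr
    have hout : ξ / vv j ∉ Metric.ball (0 : ℝ) δ := by
      simp only [Metric.mem_ball, Real.dist_eq, sub_zero, not_lt]
      exact hgt.le
    have hgz : g (ξ / vv j) = 0 := by
      by_contra h
      have hmem : ξ / vv j ∈ Function.support g := Function.mem_support.mpr h
      rw [hgdef, b.support_normed_eq] at hmem
      exact hout hmem
    have : gC (ξ / vv j) = 0 := by rw [hgCdef]; simp [hgz]
    rw [this, smul_zero, smul_zero]
  · -- value at 0
    rw [hφ_app]
    have h1 : φC 0 = 1 := by
      rw [hφC_app]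
      have h2 : ∀ j ∈ t, (a j : ℂ) * ψ (vv j * 0) = ((a j : ℝ) : ℂ) := by
        intro j hj
        rw [mul_zero, hψ0, mul_one]
      rw [Finset.sum_congr rfl h2, ← Complex.ofReal_sum]
      have h0 := key 0 (Nat.zero_le m)
      simp only [pow_zero, mul_one, if_pos rfl] at h0
      rw [h0]; norm_num
    rw [h1, Complex.one_re]
  · -- derivatives
    intro ν hν1 hνm
    have hφfun : (fun x : ℝ => φ x) = fun x => ∑ j ∈ t, a j * Ψ (vv j * x) := by
      funext x
      rw [hφ_app, hφC_app, Complex.re_sum]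
      exact Finset.sum_congr rfl fun j _ => by rw [Complex.re_ofReal_mul]
    have hΨsm : ContDiff ℝ (ν : WithTop ℕ∞) Ψ := by
      rw [hΨdef]
      exact Complex.reCLM.contDiff.comp (by exact_mod_cast ψ.smooth (ν : ℕ∞))
    have hcompj : ∀ j : ℕ, ContDiff ℝ (ν : WithTop ℕ∞) (fun x => Ψ (vv j * x)) :=
      fun j => hΨsm.comp (contDiff_const.mul contDiff_id)
    have hterm : ∀ j : ℕ, ContDiff ℝ (ν : WithTop ℕ∞) (fun x => a j * Ψ (vv j * x)) :=
      fun j => contDiff_const.mul (hcompj j)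
    have hsplit : iteratedDeriv ν (fun x => ∑ j ∈ t, a j * Ψ (vv j * x)) 0
        = ∑ j ∈ t, iteratedDeriv ν (fun x => a j * Ψ (vv j * x)) 0 := by
      rw [iteratedDeriv_eq_iteratedFDeriv]
      rw [show (fun x : ℝ => ∑ j ∈ t, a j * Ψ (vv j * x))
          = (∑ j ∈ t, (fun x : ℝ => a j * Ψ (vv j * x)) ·) from rfl]
      rw [iteratedFDeriv_sum fun j _ => hterm j]
      rw [Finset.sum_apply, ContinuousMultilinearMap.sum_apply]
      exact Finset.sum_congr rfl fun j _ => iteratedDeriv_eq_iteratedFDeriv.symm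
    have hterm_eq : ∀ j ∈ t, iteratedDeriv ν (fun x => a j * Ψ (vv j * x)) 0
        = (a j * vv j ^ ν) * iteratedDeriv ν Ψ 0 := by
      intro j _
      rw [← iteratedDerivWithin_univ,
        iteratedDerivWithin_const_mul (Set.mem_univ (0:ℝ)) uniqueDiffOn_univ (a j)
          (hcompj j).contDiffWithinAt, iteratedDerivWithin_univ]
      have h2 := iteratedDeriv_comp_const_mul hΨsm (vv j)
      have h3 := congrFun h2 0
      rw [mul_zero] at h3
      rw [h3]
      ring
    rw [hφfun, hsplit, Finset.sum_congr rfl hterm_eq, ← Finset.sum_mul, key ν hνm,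
      if_neg (by omega), zero_mul]
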